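/- If R₀ = b(1-μ_l)(1-μ_p)/μ_a < 1, then for every solution of the LPAA map with nonnegative initial data, all four coordinates tend to 0 as t → ∞ (global asymptotic stability of the extinction equilibrium). -/

import Mathlib

open Real Filter

set_option maxHeartbeats 1600000

theorem stmt_9 (b c₁ c₂ μl μp μa : ℝ)
    (hb : 0 < b) (hc₁ : 0 ≤ c₁) (hc₂ : 0 ≤ c₂)
    (hμl : μl ∈ Set.Ioo (0:ℝ) 1) (hμp : μp ∈ Set.Ioo (0:ℝ) 1) (hμa : μa ∈ Set.Ioo (0:ℝ) 1)
    (hR₀ : b * (1 - μl) * (1 - μp) / μa < 1)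
    (L P A₁ A₂ : ℕ → ℝ)
    (hL : ∀ t, L (t + 1) = b * A₂ t * Real.exp (-c₁ * A₂ t))
    (hP : ∀ t, P (t + 1) = (1 - μl) * L t)
    (hA₁ : ∀ t, A₁ (t + 1) = (1 - μp) * P t)
    (hA₂ : ∀ t, A₂ (t + 1) = A₁ t * Real.exp (-c₂ * A₂ t) + (1 - μa) * A₂ t)
    (h0 : 0 ≤ L 0 ∧ 0 ≤ P 0 ∧ 0 ≤ A₁ 0 ∧ 0 ≤ A₂ 0) :
    Tendsto L atTop (nhds 0) ∧ Tendsto P atTop (nhds 0) ∧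
    Tendsto A₁ atTop (nhds 0) ∧ Tendsto A₂ atTop (nhds 0) := by
  obtain ⟨hμl0, hμl1⟩ := hμl
  obtain ⟨hμp0, hμp1⟩ := hμp
  obtain ⟨hμa0, hμa1⟩ := hμa
  -- nonnegativity
  have hnn : ∀ t, 0 ≤ L t ∧ 0 ≤ P t ∧ 0 ≤ A₁ t ∧ 0 ≤ A₂ t := by
    intro t
    induction t with
    | zero => exact h0
    | succ t ih =>
      obtain ⟨h1, h2, h3, h4⟩ := ih
      refine ⟨?_, ?_, ?_, ?_⟩
      · rw [hL]; positivity
      · rw [hP]; have : (0:ℝ) ≤ 1 - μl := by linarith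
        positivity
      · rw [hA₁]; have : (0:ℝ) ≤ 1 - μp := by linarith
        positivity
      · rw [hA₂]
        have h5 : (0:ℝ) ≤ 1 - μa := by linarith
        positivity
  -- find ρ < 1 with b(1-μl)(1-μp) < ρ³(ρ-(1-μa))
  have hKμa : b * (1 - μl) * (1 - μp) < μa := (div_lt_one hμa0).mp hR₀
  have hρ : ∃ ρ : ℝ, (b * (1 - μl) * (1 - μp) < ρ ^ 3 * (ρ - (1 - μa))
      ∧ (1 - μa < ρ ∧ 0 < ρ)) ∧ ρ < 1 := by
    have hcont : ContinuousAt (fun ρ : ℝ => ρ ^ 3 * (ρ - (1 - μa))) 1 := by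
      fun_prop
    have hf1 : b * (1 - μl) * (1 - μp) < (1:ℝ) ^ 3 * (1 - (1 - μa)) := by
      simp; linarith
    have hev1 : ∀ᶠ ρ in nhds (1:ℝ), b * (1 - μl) * (1 - μp) < ρ ^ 3 * (ρ - (1 - μa)) :=
      continuousAt_const.eventually_lt hcont hf1
    have hev2 : ∀ᶠ ρ in nhds (1:ℝ), 1 - μa < ρ ∧ 0 < ρ := by
      have : Set.Ioo (max (1 - μa) 0) (2:ℝ) ∈ nhds (1:ℝ) := by
        apply Ioo_mem_nhds
        · exact max_lt (by linarith) one_pos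
        · linarith
      filter_upwards [this] with ρ hρ
      exact ⟨lt_of_le_of_lt (le_max_left _ _) hρ.1, lt_of_le_of_lt (le_max_right _ _) hρ.1⟩
    have hev : ∀ᶠ ρ in nhdsWithin (1:ℝ) (Set.Iio 1),
        (b * (1 - μl) * (1 - μp) < ρ ^ 3 * (ρ - (1 - μa)) ∧ (1 - μa < ρ ∧ 0 < ρ)) ∧ ρ < 1 := by
      refine Filter.Eventually.and (nhdsWithin_le_nhds (hev1.and hev2)) ?_
      exact eventually_mem_nhdsWithin.mono (fun x hx => hx)
    exact hev.exists
  obtain ⟨ρ, ⟨hρK, hρμa, hρ0⟩, hρ1⟩ := hρ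
  -- weights (opaque variables with defining equations)
  obtain ⟨wL, hwL⟩ : ∃ w : ℝ, w = (1 - μl) * (1 - μp) / ρ ^ 3 := ⟨_, rfl⟩
  obtain ⟨wP, hwP⟩ : ∃ w : ℝ, w = (1 - μp) / ρ ^ 2 := ⟨_, rfl⟩
  obtain ⟨wA1, hwA1⟩ : ∃ w : ℝ, w = 1 / ρ := ⟨_, rfl⟩
  have hwL0 : 0 < wL := by rw [hwL]; apply div_pos (by nlinarith) (by positivity)
  have hwP0 : 0 < wP := by rw [hwP]; apply div_pos (by linarith) (by positivity)
  have hwA10 : 0 < wA1 := by rw [hwA1]; positivity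
  obtain ⟨V, hV⟩ : ∃ V : ℕ → ℝ,
      V = fun t => wL * L t + wP * P t + wA1 * A₁ t + A₂ t := ⟨_, rfl⟩
  have hVt : ∀ t, V t = wL * L t + wP * P t + wA1 * A₁ t + A₂ t := fun t => by rw [hV]
  have hVnn : ∀ t, 0 ≤ V t := by
    intro t
    obtain ⟨h1, h2, h3, h4⟩ := hnn t
    rw [hVt]
    have := hwL0.le; have := hwP0.le; have := hwA10.le
    positivity
  -- key Lyapunov step
  have hstep : ∀ t, V (t + 1) ≤ ρ * V t := by
    intro t
    obtain ⟨h1, h2, h3, h4⟩ := hnn t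
    have hexp1 : Real.exp (-c₁ * A₂ t) ≤ 1 := by
      apply Real.exp_le_one_iff.mpr; nlinarith
    have hexp2 : Real.exp (-c₂ * A₂ t) ≤ 1 := by
      apply Real.exp_le_one_iff.mpr; nlinarith
    have hLle : L (t + 1) ≤ b * A₂ t := by
      rw [hL]
      calc b * A₂ t * Real.exp (-c₁ * A₂ t) ≤ b * A₂ t * 1 := by
            apply mul_le_mul_of_nonneg_left hexp1; positivity
        _ = b * A₂ t := by ring
    have hA₂le : A₂ (t + 1) ≤ A₁ t + (1 - μa) * A₂ t := by
      rw [hA₂]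
      have : A₁ t * Real.exp (-c₂ * A₂ t) ≤ A₁ t := by
        nlinarith [Real.exp_pos (-c₂ * A₂ t)]
      linarith
    have hVle : V (t + 1) ≤ wL * (b * A₂ t) + wP * ((1 - μl) * L t)
        + wA1 * ((1 - μp) * P t) + (A₁ t + (1 - μa) * A₂ t) := by
      rw [hVt, hP, hA₁]
      have := mul_le_mul_of_nonneg_left hLle hwL0.le
      linarith
    refine hVle.trans ?_
    have e1 : wP * (1 - μl) = ρ * wL := by
      rw [hwP, hwL]; field_simp
    have e2 : wA1 * (1 - μp) = ρ * wP := by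
      rw [hwA1, hwP]; field_simp
    have e3 : (1:ℝ) = ρ * wA1 := by rw [hwA1]; field_simp
    have e4 : wL * b + (1 - μa) ≤ ρ := by
      have h3 : (0:ℝ) < ρ ^ 3 := by positivity
      have hq : wL * b ≤ ρ - (1 - μa) := by
        rw [hwL, div_mul_eq_mul_div, div_le_iff₀ h3]
        nlinarith [hρK]
      linarith
    have f1 : wP * ((1 - μl) * L t) = ρ * (wL * L t) := by
      rw [← mul_assoc, e1]; ring
    have f2 : wA1 * ((1 - μp) * P t) = ρ * (wP * P t) := by
      rw [← mul_assoc, e2]; ring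
    have f3 : A₁ t = ρ * (wA1 * A₁ t) := by
      rw [← mul_assoc, ← e3]; ring
    have f4 : wL * (b * A₂ t) + (1 - μa) * A₂ t ≤ ρ * A₂ t := by
      have h := mul_le_mul_of_nonneg_right e4 h4
      nlinarith [h]
    have expand : ρ * V t
        = ρ * (wL * L t) + ρ * (wP * P t) + ρ * (wA1 * A₁ t) + ρ * A₂ t := by
      rw [hVt]; ring
    rw [expand]
    linarith [f1, f2, f3, f4]
  -- geometric decay
  have hgeo : ∀ t, V t ≤ ρ ^ t * V 0 := by
    intro t
    induction t with
    | zero => simp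
    | succ t ih =>
      calc V (t + 1) ≤ ρ * V t := hstep t
        _ ≤ ρ * (ρ ^ t * V 0) := mul_le_mul_of_nonneg_left ih hρ0.le
        _ = ρ ^ (t + 1) * V 0 := by ring
  have hVtend : Tendsto V atTop (nhds 0) := by
    have htend : Tendsto (fun t => ρ ^ t * V 0) atTop (nhds 0) := by
      have := (tendsto_pow_atTop_nhds_zero_of_lt_one hρ0.le hρ1).mul_const (V 0)
      simpa using this
    exact squeeze_zero hVnn hgeo htend
  -- extract each coordinate
  have key : ∀ (w : ℝ) (x : ℕ → ℝ), 0 < w → (∀ t, 0 ≤ x t) →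
      (∀ t, w * x t ≤ V t) → Tendsto x atTop (nhds 0) := by
    intro w x hw hx hxV
    have h1 : ∀ t, x t ≤ w⁻¹ * V t := by
      intro t
      rw [le_inv_mul_iff₀ hw]
      exact hxV t
    have h2 : Tendsto (fun t => w⁻¹ * V t) atTop (nhds 0) := by
      have := hVtend.const_mul w⁻¹
      simpa using this
    exact squeeze_zero hx h1 h2
  refine ⟨?_, ?_, ?_, ?_⟩
  · refine key wL L hwL0 (fun t => (hnn t).1) (fun t => ?_)
    obtain ⟨h1, h2, h3, h4⟩ := hnn t
    rw [hVt]
    linarith [mul_nonneg hwP0.le h2, mul_nonneg hwA10.le h3, h4]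
  · refine key wP P hwP0 (fun t => (hnn t).2.1) (fun t => ?_)
    obtain ⟨h1, h2, h3, h4⟩ := hnn t
    rw [hVt]
    linarith [mul_nonneg hwL0.le h1, mul_nonneg hwA10.le h3, h4]
  · refine key wA1 A₁ hwA10 (fun t => (hnn t).2.2.1) (fun t => ?_)
    obtain ⟨h1, h2, h3, h4⟩ := hnn t
    rw [hVt]
    linarith [mul_nonneg hwL0.le h1, mul_nonneg hwP0.le h2, h4]
  · refine key 1 A₂ one_pos (fun t => (hnn t).2.2.2) (fun t => ?_)
    obtain ⟨h1, h2, h3, h4⟩ := hnn t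
    rw [hVt]
    linarith [mul_nonneg hwL0.le h1, mul_nonneg hwP0.le h2, mul_nonneg hwA10.le h3]
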